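/- (Correctness of Algorithm 4 / Theorem 2.) Let σ be a finite alphabet with at most m distinct characters, let T : Fin n → Option σ be a text and P : Fin m → Option σ a pattern (none encodes a wild card), with m ≤ n and m ≥ 2. For an alignment offset i with i + m ≤ n, let H_i be the number of j < m with T(i+j) ≠ none, P(j) ≠ none and T(i+j) ≠ P(j). Fix reals ε with 0 < ε ≤ 1 and α > 0, and a natural number r with r ≥ 6(α+3)·(ln m)/ε². Draw r independent uniformly random functions Q₁, …, Q_r : σ → Bool, interpret Bool values as the integers 1 and 2 and extend each Q_ℓ to Option σ by sending none to 0, and set C[i] = Σ_{ℓ ≤ r} Σ_{j < m} (Q_ℓ(T(i+j)) − Q_ℓ(P(j)))² · Q_ℓ(T(i+j)) · Q_ℓ(P(j)). Then with probability at least 1 − m^{−α}, simultaneously for every alignment offset i with i + m ≤ n, it holds that (1−ε)·r·H_i ≤ C[i] ≤ (1+ε)·r·H_i; in particular the estimate h_i = C[i]/r lies in the interval [(1−ε)H_i, (1+ε)H_i]. -/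

import Mathlib

open scoped Classical

/-- The integer value assigned to an optional character (`none` = wild card, value `0`)
by a two-coloring `Q : σ → Bool`, with `false ↦ 1` and `true ↦ 2`. -/
def optVal {σ : Type*} (Q : σ → Bool) : Option σ → ℤ
  | none => 0
  | some x => if Q x then 2 else 1

/-- The wildcard-aware Hamming distance `H_i` of alignment offset `i`: the number of
positions `j < m` with `T(i+j) ≠ none`, `P(j) ≠ none` and `T(i+j) ≠ P(j)`. -/
noncomputable def hammingW {σ : Type*} {n m : ℕ} (T : Fin n → Option σ)
    (P : Fin m → Option σ) (i : ℕ) (h : i + m ≤ n) : ℕ :=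
  (Finset.univ.filter (fun j : Fin m =>
    T ⟨i + j.val, lt_of_lt_of_le (Nat.add_lt_add_left j.isLt i) h⟩ ≠ none ∧
    P j ≠ none ∧
    T ⟨i + j.val, lt_of_lt_of_le (Nat.add_lt_add_left j.isLt i) h⟩ ≠ P j)).card

/-- The counter `C[i]` of Algorithm 4 computed from the `r` random phases
`ω 0, …, ω (r-1) : σ → Bool`. -/
def algFourCount {σ : Type*} {n m r : ℕ} (T : Fin n → Option σ)
    (P : Fin m → Option σ) (ω : Fin r → σ → Bool) (i : ℕ) (h : i + m ≤ n) : ℤ :=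
  ∑ ℓ : Fin r, ∑ j : Fin m,
    (optVal (ω ℓ) (T ⟨i + j.val, lt_of_lt_of_le (Nat.add_lt_add_left j.isLt i) h⟩) -
        optVal (ω ℓ) (P j)) ^ 2 *
      optVal (ω ℓ) (T ⟨i + j.val, lt_of_lt_of_le (Nat.add_lt_add_left j.isLt i) h⟩) *
      optVal (ω ℓ) (P j)

open Finset

/-- Chernoff-type counting bound for sums of `±1`-valued balanced functions of
independent uniform coordinates. -/
lemma mgf_count {τ : Type*} [Fintype τ]
    (φ : τ → ℝ) (hφ : ∀ g, φ g = 1 ∨ φ g = -1)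
    (hbal : 2 * (univ.filter fun g => φ g = 1).card = Fintype.card τ)
    (r : ℕ) (hrpos : 0 < r) (t : ℝ) (ht : 0 ≤ t) :
    ((univ.filter fun ω : Fin r → τ => t ≤ ∑ ℓ : Fin r, φ (ω ℓ)).card : ℝ) ≤
      (Fintype.card (Fin r → τ) : ℝ) * Real.exp (-t ^ 2 / (2 * r)) := by
  have hr0 : (0:ℝ) < r := by exact_mod_cast hrpos
  set lam : ℝ := t / r with hlam
  have hlam0 : 0 ≤ lam := div_nonneg ht hr0.le
  -- single-coordinate mgf
  have hsingle : ∑ g : τ, Real.exp (lam * φ g)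
      = (Fintype.card τ : ℝ) * Real.cosh lam := by
    rw [← Finset.sum_filter_add_sum_filter_not univ (fun g => φ g = 1)]
    have h1 : ∑ g ∈ univ.filter (fun g => φ g = 1), Real.exp (lam * φ g)
        = ((univ.filter (fun g => φ g = 1)).card : ℝ) * Real.exp lam := by
      rw [Finset.sum_congr rfl (fun g hg => by
        rw [(Finset.mem_filter.1 hg).2, mul_one]), Finset.sum_const, nsmul_eq_mul]
    have h2 : ∑ g ∈ univ.filter (fun g => ¬ φ g = 1), Real.exp (lam * φ g)
        = ((univ.filter (fun g => ¬ φ g = 1)).card : ℝ) * Real.exp (-lam) := by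
      rw [Finset.sum_congr rfl (fun g hg => by
        have := (Finset.mem_filter.1 hg).2
        rcases hφ g with h | h
        · exact absurd h this
        · rw [h, mul_neg_one]), Finset.sum_const, nsmul_eq_mul]
    have hcards : (univ.filter (fun g => φ g = 1)).card
        + (univ.filter (fun g => ¬ φ g = 1)).card = Fintype.card τ := by
      rw [Finset.card_filter_add_card_filter_not]; exact Finset.card_univ
    have hne : 2 * (univ.filter (fun g => ¬ φ g = 1)).card = Fintype.card τ := by omega
    rw [h1, h2, Real.cosh_eq]
    have e1 : 2 * ((univ.filter (fun g => φ g = 1)).card : ℝ) = (Fintype.card τ : ℝ) := by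
      exact_mod_cast hbal
    have e2 : 2 * ((univ.filter (fun g => ¬ φ g = 1)).card : ℝ) = (Fintype.card τ : ℝ) := by
      exact_mod_cast hne
    linear_combination (Real.exp lam / 2) * e1 + (Real.exp (-lam) / 2) * e2
  -- factorization of the full mgf
  have hfact : ∑ ω : Fin r → τ, Real.exp (lam * ∑ ℓ : Fin r, φ (ω ℓ))
      = (∑ g : τ, Real.exp (lam * φ g)) ^ r := by
    have h1 : ∀ ω : Fin r → τ, Real.exp (lam * ∑ ℓ : Fin r, φ (ω ℓ))
        = ∏ ℓ : Fin r, Real.exp (lam * φ (ω ℓ)) := by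
      intro ω; rw [Finset.mul_sum, Real.exp_sum]
    simp_rw [h1]
    rw [← Fintype.prod_sum (fun (_ : Fin r) (g : τ) => Real.exp (lam * φ g))]
    simp
  -- Markov step
  have hmarkov : ((univ.filter fun ω : Fin r → τ => t ≤ ∑ ℓ : Fin r, φ (ω ℓ)).card : ℝ)
        * Real.exp (lam * t)
      ≤ ∑ ω : Fin r → τ, Real.exp (lam * ∑ ℓ : Fin r, φ (ω ℓ)) := by
    calc ((univ.filter fun ω : Fin r → τ => t ≤ ∑ ℓ : Fin r, φ (ω ℓ)).card : ℝ)
          * Real.exp (lam * t)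
        = ∑ _ω ∈ univ.filter fun ω : Fin r → τ => t ≤ ∑ ℓ : Fin r, φ (ω ℓ),
            Real.exp (lam * t) := by rw [Finset.sum_const, nsmul_eq_mul]
      _ ≤ ∑ ω ∈ univ.filter fun ω : Fin r → τ => t ≤ ∑ ℓ : Fin r, φ (ω ℓ),
            Real.exp (lam * ∑ ℓ : Fin r, φ (ω ℓ)) := by
          apply Finset.sum_le_sum
          intro ω hω
          exact Real.exp_le_exp.2 (mul_le_mul_of_nonneg_left (Finset.mem_filter.1 hω).2 hlam0)
      _ ≤ ∑ ω : Fin r → τ, Real.exp (lam * ∑ ℓ : Fin r, φ (ω ℓ)) :=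
          Finset.sum_le_sum_of_subset_of_nonneg (Finset.filter_subset _ _)
            (fun _ _ _ => (Real.exp_pos _).le)
  -- combine
  have hcosh : (∑ g : τ, Real.exp (lam * φ g)) ^ r
      ≤ ((Fintype.card τ : ℝ) * Real.exp (lam ^ 2 / 2)) ^ r := by
    apply pow_le_pow_left₀
    · rw [hsingle]; positivity
    · rw [hsingle]
      exact mul_le_mul_of_nonneg_left (Real.cosh_le_exp_half_sq lam) (by positivity)
  have hcardfun : (Fintype.card (Fin r → τ) : ℝ) = ((Fintype.card τ : ℝ)) ^ r := by
    rw [Fintype.card_fun]; push_cast; simp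
  have hexp : ((Fintype.card τ : ℝ) * Real.exp (lam ^ 2 / 2)) ^ r
      = (Fintype.card (Fin r → τ) : ℝ) * Real.exp (r * (lam ^ 2 / 2)) := by
    rw [mul_pow, hcardfun, ← Real.exp_nat_mul]
  have key : ((univ.filter fun ω : Fin r → τ => t ≤ ∑ ℓ : Fin r, φ (ω ℓ)).card : ℝ)
      ≤ (Fintype.card (Fin r → τ) : ℝ) * Real.exp (r * (lam ^ 2 / 2) - lam * t) := by
    rw [Real.exp_sub, ← mul_div_assoc, le_div_iff₀ (Real.exp_pos _)]
    calc ((univ.filter fun ω : Fin r → τ => t ≤ ∑ ℓ : Fin r, φ (ω ℓ)).card : ℝ)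
          * Real.exp (lam * t)
        ≤ (∑ g : τ, Real.exp (lam * φ g)) ^ r := hfact ▸ hmarkov
      _ ≤ (Fintype.card (Fin r → τ) : ℝ) * Real.exp (r * (lam ^ 2 / 2)) := hexp ▸ hcosh
  have harg : r * (lam ^ 2 / 2) - lam * t = -t ^ 2 / (2 * r) := by
    rw [hlam]; field_simp; ring
  rwa [harg] at key

/-- For `a ≠ b`, exactly half of all colorings `g : σ → Bool` satisfy `g a = g b`. -/
lemma half_card {σ : Type*} [Fintype σ] [DecidableEq σ] {a b : σ} (hab : a ≠ b) :
    2 * (univ.filter fun g : σ → Bool => g a = g b).card = Fintype.card (σ → Bool) ∧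
    2 * (univ.filter fun g : σ → Bool => ¬ g a = g b).card = Fintype.card (σ → Bool) := by
  have hbij : (univ.filter fun g : σ → Bool => g a = g b).card
      = (univ.filter fun g : σ → Bool => ¬ g a = g b).card := by
    apply Finset.card_nbij' (fun g => Function.update g a (!(g a)))
      (fun g => Function.update g a (!(g a)))
    · intro g hg
      have hg' := (Finset.mem_filter.1 hg).2
      simp only [Finset.mem_coe, Finset.mem_filter, Finset.mem_univ, true_and]
      rw [Function.update_self, Function.update_of_ne (Ne.symm hab)]
      rw [← hg']
      exact fun h => (Bool.not_ne_self (g a)) h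
    · intro g hg
      have hg' := (Finset.mem_filter.1 hg).2
      simp only [Finset.mem_coe, Finset.mem_filter, Finset.mem_univ, true_and]
      rw [Function.update_self, Function.update_of_ne (Ne.symm hab)]
      cases h : g a <;> cases h' : g b <;> simp_all
    · intro g _
      funext c
      rcases eq_or_ne c a with rfl | hc
      · simp
      · simp [Function.update_of_ne hc]
    · intro g _
      funext c
      rcases eq_or_ne c a with rfl | hc
      · simp
      · simp [Function.update_of_ne hc]
  have hcards : (univ.filter fun g : σ → Bool => g a = g b).card
      + (univ.filter fun g : σ → Bool => ¬ g a = g b).card = Fintype.card (σ → Bool) := by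
    rw [Finset.card_filter_add_card_filter_not]; exact Finset.card_univ
  revert hbij hcards
  generalize (univ.filter fun g : σ → Bool => g a = g b).card = x
  generalize (univ.filter fun g : σ → Bool => ¬ g a = g b).card = y
  intro h1 h2
  omega

/-- Deterministic step: if all pair-discrepancies are small then every alignment count
is within the desired bounds. -/
lemma stepA {σ : Type*} [Fintype σ] [DecidableEq σ] {n m r : ℕ}
    (T : Fin n → Option σ) (P : Fin m → Option σ) (ε : ℝ)
    (ω : Fin r → σ → Bool)
    (hω : ∀ a b : σ, a ≠ b →
      |∑ ℓ : Fin r, (if ω ℓ a = ω ℓ b then (-1:ℝ) else 1)| ≤ ε * r)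
    (i : ℕ) (h : i + m ≤ n) :
    (1 - ε) * (r : ℝ) * (hammingW T P i h : ℝ) ≤ (algFourCount T P ω i h : ℝ) ∧
    (algFourCount T P ω i h : ℝ) ≤ (1 + ε) * (r : ℝ) * (hammingW T P i h : ℝ) := by
  set idx : Fin m → Fin n := fun j =>
    ⟨i + j.val, lt_of_lt_of_le (Nat.add_lt_add_left j.isLt i) h⟩ with hidx
  set c : Fin m → ℝ := fun j => ∑ ℓ : Fin r,
    (((optVal (ω ℓ) (T (idx j)) - optVal (ω ℓ) (P j)) ^ 2 *
      optVal (ω ℓ) (T (idx j)) * optVal (ω ℓ) (P j) : ℤ) : ℝ) with hc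
  have hC : (algFourCount T P ω i h : ℝ) = ∑ j : Fin m, c j := by
    rw [hc]
    unfold algFourCount
    push_cast
    rw [Finset.sum_comm]
  set M : Finset (Fin m) := Finset.univ.filter (fun j : Fin m =>
    T (idx j) ≠ none ∧ P j ≠ none ∧ T (idx j) ≠ P j) with hM
  have hH : (hammingW T P i h : ℝ) = (M.card : ℝ) := by
    have : hammingW T P i h = M.card := by
      unfold hammingW
      rw [hM, hidx]
      congr!
    rw [this]
  have hzero : ∀ j ∈ Finset.univ, j ∉ M → c j = 0 := by
    intro j _ hj
    rw [hM, Finset.mem_filter] at hj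
    push_neg at hj
    rw [hc]
    rcases Classical.em (T (idx j) = none) with hT | hT
    · simp [hT, optVal]
    rcases Classical.em (P j = none) with hP | hP
    · simp [hP, optVal]
    have hTP : T (idx j) = P j := hj (Finset.mem_univ j) hT hP
    simp [hTP]
  have hbound : ∀ j ∈ M, (1 - ε) * (r : ℝ) ≤ c j ∧ c j ≤ (1 + ε) * (r : ℝ) := by
    intro j hj
    rw [hM, Finset.mem_filter] at hj
    obtain ⟨-, hT, hP, hTP⟩ := hj
    obtain ⟨a, ha⟩ := Option.ne_none_iff_exists'.1 hT
    obtain ⟨b, hb⟩ := Option.ne_none_iff_exists'.1 hP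
    have hab : a ≠ b := by
      intro hex; apply hTP; rw [ha, hb, hex]
    have hterm : ∀ ℓ : Fin r,
        (((optVal (ω ℓ) (T (idx j)) - optVal (ω ℓ) (P j)) ^ 2 *
          optVal (ω ℓ) (T (idx j)) * optVal (ω ℓ) (P j) : ℤ) : ℝ)
        = 1 + (if ω ℓ a = ω ℓ b then (-1:ℝ) else 1) := by
      intro ℓ
      rw [ha, hb]
      simp only [optVal]
      cases hx : ω ℓ a <;> cases hy : ω ℓ b <;> norm_num
    have hcj : c j = (r : ℝ) + ∑ ℓ : Fin r, (if ω ℓ a = ω ℓ b then (-1:ℝ) else 1) := by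
      rw [hc]
      simp only [hterm]
      rw [Finset.sum_add_distrib, Finset.sum_const, Finset.card_univ, Fintype.card_fin,
        nsmul_eq_mul, mul_one]
    have habs := abs_le.1 (hω a b hab)
    constructor <;> [skip; skip] <;> rw [hcj] <;> nlinarith [habs.1, habs.2]
  have hsum : ∑ j : Fin m, c j = ∑ j ∈ M, c j :=
    (Finset.sum_subset (Finset.filter_subset _ _) hzero).symm
  constructor
  · rw [hC, hsum, hH]
    calc (1 - ε) * (r : ℝ) * (M.card : ℝ)
        = ∑ _j ∈ M, (1 - ε) * (r : ℝ) := by rw [Finset.sum_const, nsmul_eq_mul]; ring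
      _ ≤ ∑ j ∈ M, c j := Finset.sum_le_sum (fun j hj => (hbound j hj).1)
  · rw [hC, hsum, hH]
    calc ∑ j ∈ M, c j
        ≤ ∑ _j ∈ M, (1 + ε) * (r : ℝ) := Finset.sum_le_sum (fun j hj => (hbound j hj).2)
      _ = (1 + ε) * (r : ℝ) * (M.card : ℝ) := by rw [Finset.sum_const, nsmul_eq_mul]; ring

/-- Correctness of Algorithm 4 / Theorem 2. With `r` uniformly
random phases, `r ≥ 6(α+3)·ln(m)/ε²`, with probability at least `1 − m^{−α}` over the
choice of `ω : Fin r → σ → Bool`, simultaneously for every alignment offset `i`,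
`(1−ε)·r·H_i ≤ C[i] ≤ (1+ε)·r·H_i`. -/
theorem algFour_correct {σ : Type*} [Fintype σ] [DecidableEq σ]
    (n m : ℕ) (hcard : Fintype.card σ ≤ m) (hm2 : 2 ≤ m) (hmn : m ≤ n)
    (T : Fin n → Option σ) (P : Fin m → Option σ)
    (ε α : ℝ) (hε : 0 < ε) (hε1 : ε ≤ 1) (hα : 0 < α)
    (r : ℕ) (hr : 6 * (α + 3) * Real.log m / ε ^ 2 ≤ (r : ℝ)) :
    1 - (m : ℝ) ^ (-α) ≤
      ((Finset.univ.filter (fun ω : Fin r → σ → Bool =>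
          ∀ (i : ℕ) (h : i + m ≤ n),
            (1 - ε) * (r : ℝ) * (hammingW T P i h : ℝ) ≤ (algFourCount T P ω i h : ℝ) ∧
            (algFourCount T P ω i h : ℝ) ≤
              (1 + ε) * (r : ℝ) * (hammingW T P i h : ℝ))).card : ℝ) /
        (Fintype.card (Fin r → σ → Bool) : ℝ) := by
  have hm1 : (1:ℝ) < (m:ℝ) := by exact_mod_cast hm2.trans_lt' one_lt_two
  have hm0 : (0:ℝ) < (m:ℝ) := by linarith
  have hlogm : 0 < Real.log m := Real.log_pos hm1
  have hrpos : 0 < r := by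
    have h1 : (0:ℝ) < 6 * (α + 3) * Real.log m / ε ^ 2 := by positivity
    have : (0:ℝ) < (r:ℝ) := lt_of_lt_of_le h1 hr
    exact_mod_cast this
  have hK0 : (0:ℝ) < (Fintype.card (Fin r → σ → Bool) : ℝ) := by
    exact_mod_cast Fintype.card_pos
  set K : ℕ := Fintype.card (Fin r → σ → Bool) with hK
  set Good : Finset (Fin r → σ → Bool) := Finset.univ.filter (fun ω : Fin r → σ → Bool =>
          ∀ (i : ℕ) (h : i + m ≤ n),
            (1 - ε) * (r : ℝ) * (hammingW T P i h : ℝ) ≤ (algFourCount T P ω i h : ℝ) ∧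
            (algFourCount T P ω i h : ℝ) ≤
              (1 + ε) * (r : ℝ) * (hammingW T P i h : ℝ)) with hGood
  set estarP : (Fin r → σ → Bool) → Prop := fun ω => ∀ a b : σ, a ≠ b →
      |∑ ℓ : Fin r, (if ω ℓ a = ω ℓ b then (-1:ℝ) else 1)| ≤ ε * r with hestarP
  set Estar : Finset (Fin r → σ → Bool) := Finset.univ.filter estarP with hEstar
  set Bad : Finset (Fin r → σ → Bool) := Finset.univ.filter (fun ω => ¬ estarP ω) with hBad
  -- Step A: Estar ⊆ Good
  have hsubset : Estar ⊆ Good := by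
    intro ω hω
    rw [hGood, Finset.mem_filter]
    refine ⟨Finset.mem_univ _, fun i h => ?_⟩
    exact stepA T P ε ω ((Finset.mem_filter.1 hω).2) i h
  have hEB : Estar.card + Bad.card = K := by
    rw [hEstar, hBad, Finset.card_filter_add_card_filter_not, Finset.card_univ]
  -- per-pair Chernoff bound
  set E : ℝ := Real.exp (-(ε * r) ^ 2 / (2 * r)) with hE
  have htnn : (0:ℝ) ≤ ε * r := by positivity
  have hpair1 : ∀ a b : σ, a ≠ b →
      ((Finset.univ.filter (fun ω : Fin r → σ → Bool =>
        ε * r ≤ ∑ ℓ : Fin r, (if ω ℓ a = ω ℓ b then (-1:ℝ) else 1))).card : ℝ) ≤ K * E := by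
    intro a b hab
    have hφ : ∀ g : σ → Bool, (if g a = g b then (-1:ℝ) else 1) = 1 ∨
        (if g a = g b then (-1:ℝ) else 1) = -1 := by
      intro g; split <;> simp
    have hbal : 2 * (Finset.univ.filter fun g : σ → Bool =>
        (if g a = g b then (-1:ℝ) else 1) = 1).card = Fintype.card (σ → Bool) := by
      have : (Finset.univ.filter fun g : σ → Bool =>
          (if g a = g b then (-1:ℝ) else 1) = 1)
          = (Finset.univ.filter fun g : σ → Bool => ¬ g a = g b) := by
        apply Finset.filter_congr
        intro g _
        constructor
        · intro h1 heq
          rw [if_pos heq] at h1; norm_num at h1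
        · intro hne
          rw [if_neg hne]
      rw [this]
      exact (half_card hab).2
    exact mgf_count (fun g : σ → Bool => if g a = g b then (-1:ℝ) else 1) hφ hbal r hrpos
      (ε * r) htnn
  have hpair2 : ∀ a b : σ, a ≠ b →
      ((Finset.univ.filter (fun ω : Fin r → σ → Bool =>
        ε * r ≤ ∑ ℓ : Fin r, (if ω ℓ a = ω ℓ b then (1:ℝ) else -1))).card : ℝ) ≤ K * E := by
    intro a b hab
    have hφ : ∀ g : σ → Bool, (if g a = g b then (1:ℝ) else -1) = 1 ∨
        (if g a = g b then (1:ℝ) else -1) = -1 := by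
      intro g; split <;> simp
    have hbal : 2 * (Finset.univ.filter fun g : σ → Bool =>
        (if g a = g b then (1:ℝ) else -1) = 1).card = Fintype.card (σ → Bool) := by
      have : (Finset.univ.filter fun g : σ → Bool =>
          (if g a = g b then (1:ℝ) else -1) = 1)
          = (Finset.univ.filter fun g : σ → Bool => g a = g b) := by
        apply Finset.filter_congr
        intro g _
        constructor
        · intro h1
          by_contra hne
          rw [if_neg hne] at h1; norm_num at h1
        · intro heq
          rw [if_pos heq]
      rw [this]
      exact (half_card hab).1
    exact mgf_count (fun g : σ → Bool => if g a = g b then (1:ℝ) else -1) hφ hbal r hrpos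
      (ε * r) htnn
  -- union bound
  set F : σ × σ → Finset (Fin r → σ → Bool) := fun p =>
      (Finset.univ.filter (fun ω : Fin r → σ → Bool =>
        ε * r ≤ ∑ ℓ : Fin r, (if ω ℓ p.1 = ω ℓ p.2 then (-1:ℝ) else 1))) ∪
      (Finset.univ.filter (fun ω : Fin r → σ → Bool =>
        ε * r ≤ ∑ ℓ : Fin r, (if ω ℓ p.1 = ω ℓ p.2 then (1:ℝ) else -1))) with hF
  have hBsub : Bad ⊆ (Finset.univ.offDiag : Finset (σ × σ)).biUnion F := by
    intro ω hω
    rw [hBad, Finset.mem_filter] at hω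
    obtain ⟨-, hω⟩ := hω
    simp only [hestarP] at hω
    push_neg at hω
    obtain ⟨a, b, hab, habs⟩ := hω
    have hflip : ∑ ℓ : Fin r, (if ω ℓ a = ω ℓ b then (1:ℝ) else -1)
        = - ∑ ℓ : Fin r, (if ω ℓ a = ω ℓ b then (-1:ℝ) else 1) := by
      rw [← Finset.sum_neg_distrib]
      apply Finset.sum_congr rfl
      intro ℓ _
      split <;> norm_num
    rw [Finset.mem_biUnion]
    refine ⟨(a, b), Finset.mem_offDiag.2 ⟨Finset.mem_univ _, Finset.mem_univ _, hab⟩, ?_⟩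
    rw [hF]
    rw [Finset.mem_union, Finset.mem_filter, Finset.mem_filter]
    rcases lt_abs.1 habs with h1 | h1
    · exact Or.inl ⟨Finset.mem_univ _, h1.le⟩
    · refine Or.inr ⟨Finset.mem_univ _, ?_⟩
      rw [hflip]
      linarith
  have hFcard : ∀ p ∈ (Finset.univ.offDiag : Finset (σ × σ)),
      ((F p).card : ℝ) ≤ 2 * (K:ℝ) * E := by
    intro p hp
    have hab : p.1 ≠ p.2 := (Finset.mem_offDiag.1 hp).2.2
    have hcu : ((F p).card : ℝ)
        ≤ ((Finset.univ.filter (fun ω : Fin r → σ → Bool =>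
            ε * r ≤ ∑ ℓ : Fin r, (if ω ℓ p.1 = ω ℓ p.2 then (-1:ℝ) else 1))).card : ℝ)
          + ((Finset.univ.filter (fun ω : Fin r → σ → Bool =>
            ε * r ≤ ∑ ℓ : Fin r, (if ω ℓ p.1 = ω ℓ p.2 then (1:ℝ) else -1))).card : ℝ) := by
      rw [hF]
      exact_mod_cast Finset.card_union_le _ _
    have hb1 := hpair1 p.1 p.2 hab
    have hb2 := hpair2 p.1 p.2 hab
    linarith
  have hBadcard : (Bad.card : ℝ) ≤ (m:ℝ) ^ 2 * (2 * K * E) := by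
    have h1 : Bad.card ≤ ∑ p ∈ (Finset.univ.offDiag : Finset (σ × σ)), (F p).card :=
      le_trans (Finset.card_le_card hBsub) (Finset.card_biUnion_le)
    have h3 : ((Finset.univ.offDiag : Finset (σ × σ)).card : ℝ) ≤ (m:ℝ) ^ 2 := by
      have h4 : (Finset.univ.offDiag : Finset (σ × σ)).card ≤ m * m := by
        calc (Finset.univ.offDiag : Finset (σ × σ)).card
            ≤ (Finset.univ : Finset σ).card * (Finset.univ : Finset σ).card := by
              rw [Finset.offDiag_card]; exact Nat.sub_le _ _
          _ ≤ m * m := by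
              rw [Finset.card_univ]
              exact Nat.mul_le_mul hcard hcard
      calc ((Finset.univ.offDiag : Finset (σ × σ)).card : ℝ) ≤ ((m * m : ℕ) : ℝ) := by
            exact_mod_cast h4
        _ = (m:ℝ) ^ 2 := by push_cast; ring
    calc (Bad.card : ℝ)
        ≤ ((∑ p ∈ (Finset.univ.offDiag : Finset (σ × σ)), (F p).card : ℕ) : ℝ) := by
          exact_mod_cast h1
      _ = ∑ p ∈ (Finset.univ.offDiag : Finset (σ × σ)), ((F p).card : ℝ) := by push_cast; rfl
      _ ≤ ∑ _p ∈ (Finset.univ.offDiag : Finset (σ × σ)), (2 * (K:ℝ) * E) :=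
          Finset.sum_le_sum hFcard
      _ = ((Finset.univ.offDiag : Finset (σ × σ)).card : ℝ) * (2 * (K:ℝ) * E) := by
          rw [Finset.sum_const, nsmul_eq_mul]
      _ ≤ (m:ℝ) ^ 2 * (2 * K * E) := by
          apply mul_le_mul_of_nonneg_right h3
          positivity
  -- numeric bound on E
  have hEbound : E ≤ (m:ℝ) ^ (-(3 * (α + 3))) := by
    rw [hE, Real.rpow_def_of_pos hm0]
    apply Real.exp_le_exp.2
    have hε2 : (0:ℝ) < ε ^ 2 := by positivity
    have h6 : 6 * (α + 3) * Real.log m ≤ (r:ℝ) * ε ^ 2 := by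
      rw [div_le_iff₀ hε2] at hr; linarith
    have harg : -(ε * r) ^ 2 / (2 * r) = -(ε ^ 2 * r) / 2 := by
      have hr0 : (r:ℝ) ≠ 0 := by positivity
      field_simp
    rw [harg]
    nlinarith
  have hfinal : (m:ℝ) ^ 2 * (2 * (K:ℝ) * E) ≤ (K:ℝ) * (m:ℝ) ^ (-α) := by
    have hstep : (m:ℝ) ^ 2 * (2 * (K:ℝ) * E) ≤ (K:ℝ) * (2 * (m:ℝ) ^ ((2:ℝ) + -(3 * (α + 3)))) := by
      rw [Real.rpow_add hm0]
      have h2 : (m:ℝ) ^ 2 = (m:ℝ) ^ ((2:ℝ)) := by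
        rw [show ((2:ℝ)) = ((2:ℕ):ℝ) by norm_num, Real.rpow_natCast]
      rw [h2]
      have := mul_le_mul_of_nonneg_left hEbound
        (show (0:ℝ) ≤ (m:ℝ) ^ ((2:ℝ)) by positivity)
      nlinarith [Real.rpow_nonneg hm0.le ((2:ℝ)), Real.rpow_nonneg hm0.le (-(3 * (α + 3))),
        hK0, hEbound]
    refine hstep.trans ?_
    apply mul_le_mul_of_nonneg_left ?_ hK0.le
    have hexp : (2:ℝ) + -(3 * (α + 3)) = -(3 * α + 7) := by ring
    rw [hexp]
    have h2m : (2:ℝ) ≤ (m:ℝ) ^ ((2 * α + 7):ℝ) := by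
      calc (2:ℝ) ≤ (m:ℝ) := by exact_mod_cast hm2
        _ = (m:ℝ) ^ ((1:ℝ)) := (Real.rpow_one _).symm
        _ ≤ (m:ℝ) ^ ((2 * α + 7):ℝ) :=
            Real.rpow_le_rpow_of_exponent_le hm1.le (by linarith)
    calc 2 * (m:ℝ) ^ (-(3 * α + 7))
        ≤ (m:ℝ) ^ ((2 * α + 7):ℝ) * (m:ℝ) ^ (-(3 * α + 7)) :=
          mul_le_mul_of_nonneg_right h2m (Real.rpow_nonneg hm0.le _)
      _ = (m:ℝ) ^ (-α) := by
          rw [← Real.rpow_add hm0]; ring_nf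
  -- conclude
  rw [le_div_iff₀ hK0]
  have hGE : (Estar.card : ℝ) ≤ (Good.card : ℝ) := by
    exact_mod_cast Finset.card_le_card hsubset
  have hEB' : (Estar.card : ℝ) + (Bad.card : ℝ) = (K : ℝ) := by exact_mod_cast hEB
  have hBK : (Bad.card : ℝ) ≤ (K:ℝ) * (m:ℝ) ^ (-α) := hBadcard.trans hfinal
  linarith
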